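/- Let X be a topological space and let B assign to each x ∈ X a family B(x) of subsets of X forming a weak base, i.e.: (i) x ∈ B for all B ∈ B(x); (ii) for all B₁, B₂ ∈ B(x) there is B ∈ B(x) with B ⊆ B₁ ∩ B₂; (iii) a set U ⊆ X is open if and only if for each x ∈ U, U contains an element of B(x). If for each x ∈ X some element of B(x) is countable (X is weakly locally countable), then X is locally countable: every point of X has a countable open neighborhood. -/
import Mathlib


open Topology

/-- Let `X` be a topological space and let `B` assign to each `x ∈ X` a family `B x` of
subsets of `X` forming a *weak base*: (i) `x ∈ b` for all `b ∈ B x`; (ii) for all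
`b₁, b₂ ∈ B x` there is `b ∈ B x` with `b ⊆ b₁ ∩ b₂`; (iii) a set `U ⊆ X` is open if and
only if for each `x ∈ U`, `U` contains an element of `B x`. If for each `x ∈ X` some
element of `B x` is countable (`X` is weakly locally countable), then `X` is locally
countable: every point of `X` has a countable open neighborhood. -/
theorem stmt11 {X : Type*} [TopologicalSpace X] (B : X → Set (Set X))
    (h_mem : ∀ x : X, ∀ b ∈ B x, x ∈ b)
    (h_inter : ∀ x : X, ∀ b₁ ∈ B x, ∀ b₂ ∈ B x, ∃ b ∈ B x, b ⊆ b₁ ∩ b₂)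
    (h_open : ∀ U : Set X, IsOpen U ↔ ∀ x ∈ U, ∃ b ∈ B x, b ⊆ U)
    (h_count : ∀ x : X, ∃ b ∈ B x, b.Countable) :
    ∀ x : X, ∃ U : Set X, IsOpen U ∧ x ∈ U ∧ U.Countable := by
  intro x
  choose f hfB hfc using h_count
  let A : ℕ → Set X := fun n => Nat.rec (f x) (fun _ An => An ∪ ⋃ y ∈ An, f y) n
  have hAsucc : ∀ n, A (n+1) = A n ∪ ⋃ y ∈ A n, f y := fun n => rfl
  have hAc : ∀ n, (A n).Countable := by
    intro n
    induction n with
    | zero => exact hfc x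
    | succ n ih =>
      rw [hAsucc]
      exact ih.union (ih.biUnion fun y _ => hfc y)
  refine ⟨⋃ n, A n, ?_, ?_, Set.countable_iUnion hAc⟩
  · rw [h_open]
    rintro y hy
    obtain ⟨n, hn⟩ := Set.mem_iUnion.1 hy
    refine ⟨f y, hfB y, fun z hz => Set.mem_iUnion.2 ⟨n+1, ?_⟩⟩
    exact Or.inr (Set.mem_biUnion hn hz)
  · exact Set.mem_iUnion.2 ⟨0, h_mem x _ (hfB x)⟩
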